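/- Let d > 0 and let h:[0,1]→[0,∞) be Lipschitz with h(0)=h(1)=0 and ∫₀¹ h dL¹ = d; let Ω_h := {(x,y) : 0<x<1, 0<y<h(x)}. Let J ⊆ ℤ, and for each i ∈ J let x_i ∈ (0,1) and l_i > 0 be such that x_i + l_i ≤ x_j for all i,j ∈ J with i < j, and such that ⋃_{i∈J} (x_i, x_i+l_i)×(0,l_i) ⊆ Ω_h. Set L_J := Σ_{i∈J} l_i and d_J := Σ_{i∈J} ∫_{x_i}^{x_i+l_i} h dL¹. Then ∫₀¹ √(1+|h'|²) dL¹ ≥ 2·d_J/L_J. -/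

import Mathlib

open MeasureTheory Set
open scoped NNReal

/-- The film domain Ω_h = {(x,y) : 0 < x < 1, 0 < y < h(x)}. -/
def Omeg (h : ℝ → ℝ) : Set (ℝ × ℝ) := {p | 0 < p.1 ∧ p.1 < 1 ∧ 0 < p.2 ∧ p.2 < h p.1}

lemma lipschitz_ftc (h : ℝ → ℝ) (K : ℝ≥0) (hlip : LipschitzWith K h)
    (a b : ℝ) (hab : a ≤ b) : ∫ t in a..b, deriv h t = h b - h a := by
  have hcont : Continuous h := hlip.continuous
  set e : ℕ → ℝ := fun n => 1 / (n + 1) with he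
  have he_pos : ∀ n, 0 < e n := fun n => by positivity
  have he_to : Filter.Tendsto e Filter.atTop (nhds 0) :=
    tendsto_one_div_add_atTop_nhds_zero_nat
  -- slope limit helper
  have slope_lim : ∀ (g : ℝ → ℝ) (u d : ℝ), HasDerivAt g d u →
      Filter.Tendsto (fun n => (g (u + e n) - g u) / e n) Filter.atTop (nhds d) := by
    intro g u d hg
    have h1 : Filter.Tendsto (fun n => u + e n) Filter.atTop (nhdsWithin u {u}ᶜ) := by
      apply tendsto_nhdsWithin_of_tendsto_nhds_of_eventually_within
      · simpa using tendsto_const_nhds.add he_to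
      · exact Filter.Eventually.of_forall fun n => by
          simp only [mem_compl_iff, mem_singleton_iff]
          have := (he_pos n).ne'
          intro hc; apply this; linarith
    have h2 := (hasDerivAt_iff_tendsto_slope.1 hg).comp h1
    convert h2 using 2 with n
    simp [Function.comp, slope_def_field]
  -- primitive
  set F : ℝ → ℝ := fun u => ∫ t in (0:ℝ)..u, h t with hF
  have hFd : ∀ u : ℝ, HasDerivAt F (h u) u := fun u =>
    intervalIntegral.integral_hasDerivAt_right (hcont.intervalIntegrable _ _)
      (hcont.stronglyMeasurableAtFilter _ _) hcont.continuousAt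
  have hFint : ∀ u v : ℝ, F v - F u = ∫ t in u..v, h t := fun u v =>
    intervalIntegral.integral_interval_sub_left (hcont.intervalIntegrable _ _)
      (hcont.intervalIntegrable _ _)
  -- the difference quotients
  have hQ : ∀ n, (∫ t in a..b, (h (t + e n) - h t) / e n) =
      (F (b + e n) - F b) / e n - (F (a + e n) - F a) / e n := by
    intro n
    rw [intervalIntegral.integral_div, intervalIntegral.integral_sub
      ((show Continuous fun t : ℝ => h (t + e n) from
        hcont.comp (continuous_add_right (e n))).intervalIntegrable _ _)
      (hcont.intervalIntegrable _ _)]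
    rw [intervalIntegral.integral_comp_add_right]
    rw [← hFint a b, ← hFint (a + e n) (b + e n)]
    ring
  -- limit of the RHS
  have hlim1 : Filter.Tendsto (fun n => ∫ t in a..b, (h (t + e n) - h t) / e n)
      Filter.atTop (nhds (h b - h a)) := by
    simp only [hQ]
    exact (slope_lim F b (h b) (hFd b)).sub (slope_lim F a (h a) (hFd a))
  -- dominated convergence
  have hlim2 : Filter.Tendsto (fun n => ∫ t in a..b, (h (t + e n) - h t) / e n)
      Filter.atTop (nhds (∫ t in a..b, deriv h t)) := by
    simp only [intervalIntegral.integral_of_le hab]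
    apply MeasureTheory.tendsto_integral_of_dominated_convergence (fun _ => (K : ℝ))
    · intro n
      exact (((hcont.comp (continuous_add_right (e n))).sub hcont).div_const
        (e n)).aestronglyMeasurable
    · exact integrableOn_const (by simp [Real.volume_Ioc])
    · intro n
      refine Filter.Eventually.of_forall fun t => ?_
      have : |h (t + e n) - h t| ≤ K * e n := by
        have := hlip.dist_le_mul (t + e n) t
        simpa [Real.dist_eq, add_sub_cancel_left, abs_of_pos (he_pos n)] using this
      rw [Real.norm_eq_abs, abs_div, abs_of_pos (he_pos n)]
      rw [div_le_iff₀ (he_pos n)]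
      exact this
    · have := hlip.ae_differentiableAt_real
      have hres : ∀ᵐ t ∂(volume.restrict (Ioc a b)), DifferentiableAt ℝ h t :=
        ae_restrict_of_ae this
      filter_upwards [hres] with t ht
      exact slope_lim h t (deriv h t) ht.hasDerivAt
  exact tendsto_nhds_unique hlim2 hlim1

/-- Lemma (generalized isoperimetric estimate): if the squares (x_i,x_i+l_i)×(0,l_i),
    i ∈ J ⊆ ℤ, are ordered and contained in Ω_h, then with L_J = Σ l_i and
    d_J = Σ ∫_{x_i}^{x_i+l_i} h one has ∫₀¹ √(1+|h'|²) ≥ 2 d_J / L_J. -/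
theorem isoperimetric_estimate (d : ℝ) (hd : 0 < d) (h : ℝ → ℝ) (K : ℝ≥0)
    (hlip : LipschitzWith K h) (hnn : ∀ x, 0 ≤ h x)
    (hout : ∀ x, x ∉ Icc (0:ℝ) 1 → h x = 0)
    (h0 : h 0 = 0) (h1 : h 1 = 0)
    (hvol : (∫ x in Ioo (0:ℝ) 1, h x) = d)
    (J : Set ℤ) (x l : ℤ → ℝ)
    (hx : ∀ i ∈ J, x i ∈ Ioo (0:ℝ) 1) (hl : ∀ i ∈ J, 0 < l i)
    (horder : ∀ i ∈ J, ∀ j ∈ J, i < j → x i + l i ≤ x j)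
    (hsub : ∀ i ∈ J, (Ioo (x i) (x i + l i)) ×ˢ (Ioo (0:ℝ) (l i)) ⊆ Omeg h) :
    2 * (∑' i : J, ∫ t in Ioo (x (i : ℤ)) (x (i : ℤ) + l (i : ℤ)), h t) /
        (∑' i : J, l (i : ℤ)) ≤
      ∫ t in Ioo (0:ℝ) 1, Real.sqrt (1 + (deriv h t)^2) := by
  have hcont : Continuous h := hlip.continuous
  -- the RHS is nonnegative
  have hRHS0 : 0 ≤ ∫ t in Ioo (0:ℝ) 1, Real.sqrt (1 + (deriv h t)^2) :=
    setIntegral_nonneg measurableSet_Ioo fun t _ => Real.sqrt_nonneg _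
  -- max point of h on [0,1]
  obtain ⟨c, hc, hcmax⟩ := isCompact_Icc.exists_isMaxOn (nonempty_Icc.2 zero_le_one)
    hcont.continuousOn
  have hc0 : 0 ≤ h c := hnn c
  -- derivative bound
  have hder_bd : ∀ t, |deriv h t| ≤ K := fun t => by
    simpa [Real.norm_eq_abs] using norm_deriv_le_of_lipschitz hlip
  have hmeas : Measurable (deriv h) := measurable_deriv h
  -- integrability of |deriv h| on bounded sets
  have habs_int : ∀ s : Set ℝ, MeasurableSet s → volume s ≠ ⊤ →
      IntegrableOn (fun t => |deriv h t|) s := by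
    intro s hms hvs
    refine Integrable.mono' (g := fun _ => (K:ℝ)) (integrableOn_const hvs)
      hmeas.abs.aestronglyMeasurable ?_
    exact Filter.Eventually.of_forall fun t => by
      simpa [Real.norm_eq_abs, abs_abs] using hder_bd t
  have hII : ∀ a b : ℝ, IntervalIntegrable (fun t => |deriv h t|) volume a b := by
    intro a b
    rw [intervalIntegrable_iff]
    refine habs_int _ measurableSet_uIoc ?_
    rw [uIoc_eq_union]
    exact ne_top_of_le_ne_top (by simp [Real.volume_Ioc])
      (measure_union_le (Ioc a b) (Ioc b a))
  -- √(1+t²) integrable on (0,1)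
  have hsqrt_int : IntegrableOn (fun t => Real.sqrt (1 + (deriv h t)^2)) (Ioo (0:ℝ) 1) := by
    refine Integrable.mono' (g := fun _ => Real.sqrt (1 + (K:ℝ)^2))
      (integrableOn_const (by simp [Real.volume_Ioo]))
      ?_ ?_
    · exact (Real.continuous_sqrt.measurable.comp
        ((hmeas.pow_const 2).const_add 1)).aestronglyMeasurable
    · refine Filter.Eventually.of_forall fun t => ?_
      rw [Real.norm_eq_abs, abs_of_nonneg (Real.sqrt_nonneg _)]
      apply Real.sqrt_le_sqrt
      have := hder_bd t
      nlinarith [abs_nonneg (deriv h t), sq_abs (deriv h t), NNReal.coe_nonneg K]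
  -- Step 1: ∫ |h'| ≤ ∫ √(1+h'²) on (0,1)
  have step1 : (∫ t in Ioo (0:ℝ) 1, |deriv h t|) ≤
      ∫ t in Ioo (0:ℝ) 1, Real.sqrt (1 + (deriv h t)^2) := by
    refine integral_mono (habs_int _ measurableSet_Ioo (by simp [Real.volume_Ioo])) hsqrt_int
      fun t => ?_
    rw [← Real.sqrt_sq_eq_abs]
    exact Real.sqrt_le_sqrt (by nlinarith)
  -- Step 2: 2 h(c) ≤ ∫ |h'| on (0,1)
  have step2 : 2 * h c ≤ ∫ t in Ioo (0:ℝ) 1, |deriv h t| := by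
    have h0c : h c - h 0 ≤ ∫ t in (0:ℝ)..c, |deriv h t| := by
      rw [← lipschitz_ftc h K hlip 0 c hc.1]
      exact (le_abs_self _).trans (intervalIntegral.abs_integral_le_integral_abs hc.1)
    have hc1 : h c - h 1 ≤ ∫ t in c..(1:ℝ), |deriv h t| := by
      have := lipschitz_ftc h K hlip c 1 hc.2
      have h2 : -(∫ t in c..(1:ℝ), deriv h t) = h c - h 1 := by rw [this]; ring
      calc h c - h 1 = -(∫ t in c..(1:ℝ), deriv h t) := h2.symm
        _ ≤ |∫ t in c..(1:ℝ), deriv h t| := neg_le_abs _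
        _ ≤ ∫ t in c..(1:ℝ), |deriv h t| :=
            intervalIntegral.abs_integral_le_integral_abs hc.2
    have hadd : (∫ t in (0:ℝ)..c, |deriv h t|) + ∫ t in c..(1:ℝ), |deriv h t| =
        ∫ t in (0:ℝ)..(1:ℝ), |deriv h t| :=
      intervalIntegral.integral_add_adjacent_intervals (hII 0 c) (hII c 1)
    have heq : (∫ t in (0:ℝ)..(1:ℝ), |deriv h t|) = ∫ t in Ioo (0:ℝ) 1, |deriv h t| := by
      rw [intervalIntegral.integral_of_le zero_le_one, integral_Ioc_eq_integral_Ioo]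
    rw [h0] at h0c; rw [h1] at hc1
    linarith
  -- Step 3: LHS ≤ 2 h(c)
  -- intervals are inside (0,1)
  have hIoo_sub : ∀ i ∈ J, Ioo (x i) (x i + l i) ⊆ Ioo (0:ℝ) 1 := by
    intro i hi t ht
    have hy : l i / 2 ∈ Ioo (0:ℝ) (l i) :=
      ⟨by linarith [hl i hi], by linarith [hl i hi]⟩
    have := hsub i hi (Set.mk_mem_prod ht hy)
    exact ⟨this.1, this.2.1⟩
  -- summability of lengths
  have hl_sum : Summable (fun i : J => l (i : ℤ)) := by
    apply summable_of_sum_le (fun i : J => (hl i i.2).le)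
    intro u
    have hdisj : (u : Set J).PairwiseDisjoint
        (fun i : J => Ioo (x (i:ℤ)) (x (i:ℤ) + l (i:ℤ))) := by
      intro i _ j _ hij
      have hne : (i:ℤ) ≠ (j:ℤ) := fun hc => hij (Subtype.ext hc)
      rcases hne.lt_or_gt with hlt | hlt
      · refine Set.disjoint_left.2 fun t ht1 ht2 => ?_
        have := horder i i.2 j j.2 hlt
        linarith [ht1.2, ht2.1]
      · refine Set.disjoint_left.2 fun t ht1 ht2 => ?_
        have := horder j j.2 i i.2 hlt
        linarith [ht1.1, ht2.2]
    have hmeasU : ∀ i : J, MeasurableSet (Ioo (x (i:ℤ)) (x (i:ℤ) + l (i:ℤ))) :=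
      fun _ => measurableSet_Ioo
    have hvol_eq : (∑ i ∈ u, ENNReal.ofReal (l (i:ℤ))) =
        volume (⋃ i ∈ u, Ioo (x (i:ℤ)) (x (i:ℤ) + l (i:ℤ))) := by
      rw [measure_biUnion_finset hdisj fun i _ => hmeasU i]
      refine Finset.sum_congr rfl fun i _ => ?_
      rw [Real.volume_Ioo, add_sub_cancel_left]
    have hle1 : (∑ i ∈ u, ENNReal.ofReal (l (i:ℤ))) ≤ 1 := by
      rw [hvol_eq]
      have hsub1 : (⋃ i ∈ u, Ioo (x (i:ℤ)) (x (i:ℤ) + l (i:ℤ))) ⊆ Ioo (0:ℝ) 1 :=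
        iUnion₂_subset fun i _ => hIoo_sub i i.2
      calc volume (⋃ i ∈ u, Ioo (x (i:ℤ)) (x (i:ℤ) + l (i:ℤ)))
          ≤ volume (Ioo (0:ℝ) 1) := measure_mono hsub1
        _ = 1 := by rw [Real.volume_Ioo]; norm_num
    have := ENNReal.toReal_mono (by norm_num) hle1
    rw [ENNReal.toReal_sum (fun i _ => ENNReal.ofReal_ne_top)] at this
    simp only [ENNReal.toReal_one] at this
    calc ∑ i ∈ u, l (i:ℤ) = ∑ i ∈ u, (ENNReal.ofReal (l (i:ℤ))).toReal :=
          Finset.sum_congr rfl fun i _ => (ENNReal.toReal_ofReal (hl i i.2).le).symm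
      _ ≤ 1 := this
  -- bound on each integral
  have ha_nonneg : ∀ i : J, 0 ≤ ∫ t in Ioo (x (i:ℤ)) (x (i:ℤ) + l (i:ℤ)), h t :=
    fun i => setIntegral_nonneg measurableSet_Ioo fun t _ => hnn t
  have ha_le : ∀ i : J, (∫ t in Ioo (x (i:ℤ)) (x (i:ℤ) + l (i:ℤ)), h t) ≤ h c * l (i:ℤ) := by
    intro i
    have hint : IntegrableOn h (Ioo (x (i:ℤ)) (x (i:ℤ) + l (i:ℤ))) :=
      (hcont.integrableOn_Icc).mono_set Ioo_subset_Icc_self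
    have hbd : ∀ t ∈ Ioo (x (i:ℤ)) (x (i:ℤ) + l (i:ℤ)), h t ≤ h c := by
      intro t ht
      have ht01 := hIoo_sub i i.2 ht
      exact hcmax ⟨ht01.1.le, ht01.2.le⟩
    calc (∫ t in Ioo (x (i:ℤ)) (x (i:ℤ) + l (i:ℤ)), h t)
        ≤ ∫ _ in Ioo (x (i:ℤ)) (x (i:ℤ) + l (i:ℤ)), h c :=
          setIntegral_mono_on hint (integrableOn_const (by simp [Real.volume_Ioo]))
            measurableSet_Ioo hbd
      _ = h c * l (i:ℤ) := by
          rw [setIntegral_const, smul_eq_mul, Real.volume_real_Ioo, add_sub_cancel_left,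
            max_eq_left (hl i i.2).le, mul_comm]
  have hA_sum : Summable (fun i : J => ∫ t in Ioo (x (i:ℤ)) (x (i:ℤ) + l (i:ℤ)), h t) := by
    refine Summable.of_nonneg_of_le ha_nonneg ha_le ?_
    exact hl_sum.mul_left (h c)
  have hA_le : (∑' i : J, ∫ t in Ioo (x (i:ℤ)) (x (i:ℤ) + l (i:ℤ)), h t) ≤
      h c * ∑' i : J, l (i:ℤ) := by
    rw [← tsum_mul_left]
    exact Summable.tsum_le_tsum ha_le hA_sum (hl_sum.mul_left (h c))
  -- put it together
  rcases isEmpty_or_nonempty J with hJ | hJ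
  · simp only [tsum_empty]
    simpa using hRHS0
  · obtain ⟨i₀⟩ := hJ
    have hL_pos : 0 < ∑' i : J, l (i:ℤ) :=
      lt_of_lt_of_le (hl i₀ i₀.2) (Summable.le_tsum hl_sum i₀ fun j _ => (hl j j.2).le)
    rw [div_le_iff₀ hL_pos]
    have h2hc : 2 * h c ≤ ∫ t in Ioo (0:ℝ) 1, Real.sqrt (1 + (deriv h t)^2) :=
      le_trans step2 step1
    nlinarith [hA_le, hL_pos, hc0, hRHS0,
      mul_le_mul_of_nonneg_right h2hc hL_pos.le]
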